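/- Let γ be a closed rectifiable Jordan curve in ℂ surrounding ξ_u and not surrounding or meeting any ξ_q for q ≠ u (q = 1,...,m), and let F be holomorphic in a neighborhood of γ and its interior. In A_n^m with trivial radical multiplication, (1/(2πi)) I_u ∮_γ F(t)(t e_1 − ζ)^{-1} dt = F(ξ_u) I_u + Σ_{s : u_s = u, s > m} T_s F'(ξ_u) I_s, where T_s = y a_s + z b_s. -/

import Mathlib

open Metric

section Aux
variable {n m : ℕ} {A : Type*} [NormedCommRing A] [NormedAlgebra ℂ A]
  (I : Module.Basis (Fin n) ℂ A) (u : Fin n → Fin n)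

lemma mulIP_aux
    (hidem : ∀ r s : Fin n, r.val < m → s.val < m →
      I r * I s = if r = s then I r else 0)
    (hmul3 : ∀ s : Fin n, m ≤ s.val → ∀ r : Fin n, r.val < m →
      I r * I s = if r = u s then I s else 0)
    (f : Fin n → ℂ) (p : Fin n) (hp : p.val < m) :
    (∑ r, f r • I r) * I p
      = f p • I p + ∑ r ∈ Finset.univ.filter (fun r : Fin n => m ≤ r.val ∧ u r = p),
          f r • I r := by
  rw [Finset.sum_mul]
  have key : ∀ r : Fin n, (f r • I r) * I p
      = if r.val < m then (if r = p then f r • I r else 0)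
        else (if u r = p then f r • I r else 0) := by
    intro r
    by_cases h : r.val < m
    · rw [smul_mul_assoc, hidem r p h hp, if_pos h]
      split_ifs <;> simp
    · have h' : m ≤ r.val := le_of_not_gt h
      rw [smul_mul_assoc, mul_comm (I r) (I p), hmul3 r h' p hp, if_neg h]
      by_cases hup : u r = p
      · rw [if_pos hup, if_pos hup.symm]
      · rw [if_neg hup, if_neg (Ne.symm hup), smul_zero]
  rw [Finset.sum_congr rfl fun r _ => key r]
  rw [← Finset.sum_filter_add_sum_filter_not Finset.univ (fun r : Fin n => r.val < m)]
  congr 1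
  · rw [Finset.sum_congr rfl (fun r hr => if_pos (Finset.mem_filter.mp hr).2)]
    rw [Finset.sum_ite_eq' (Finset.univ.filter _) p]
    simp [hp]
  · rw [Finset.sum_congr rfl (fun r hr => if_neg (Finset.mem_filter.mp hr).2)]
    rw [← Finset.sum_filter, Finset.filter_filter]
    apply Finset.sum_congr _ (fun _ _ => rfl)
    apply Finset.filter_congr
    intro r _
    simp [not_lt]

lemma mulIQ_aux
    (hu : ∀ s : Fin n, m ≤ s.val → (u s).val < m)
    (hmul3 : ∀ s : Fin n, m ≤ s.val → ∀ r : Fin n, r.val < m →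
      I r * I s = if r = u s then I s else 0)
    (hrad : ∀ s p : Fin n, m ≤ s.val → m ≤ p.val → I s * I p = 0)
    (f : Fin n → ℂ) (p : Fin n) (hp : m ≤ p.val) :
    (∑ r, f r • I r) * I p = f (u p) • I p := by
  rw [Finset.sum_mul]
  have key : ∀ r : Fin n, (f r • I r) * I p = if r = u p then f r • I p else 0 := by
    intro r
    by_cases h : r.val < m
    · rw [smul_mul_assoc, hmul3 p hp r h]
      split_ifs <;> simp
    · rw [smul_mul_assoc, hrad r p (le_of_not_gt h) hp, smul_zero]
      rw [if_neg (fun hr : r = u p => h (hr ▸ hu p hp))]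
  rw [Finset.sum_congr rfl fun r _ => key r, Finset.sum_ite_eq' Finset.univ (u p)]
  simp

end Aux

section Aux2
variable {n m : ℕ} {A : Type*} [NormedCommRing A] [NormedAlgebra ℂ A]
  (I : Module.Basis (Fin n) ℂ A) (u : Fin n → Fin n)

/-- decomposition of the resolvent element `t•1 - ζ` in the Cartan basis -/
lemma resolvent_decomp_aux
    (hone : ∑ w ∈ Finset.univ.filter (fun w : Fin n => w.val < m), I w = 1)
    (a b : Fin n → ℂ) (x y z : ℝ) (e₂ e₃ ζ : A)
    (he₂ : e₂ = ∑ r, a r • I r) (he₃ : e₃ = ∑ r, b r • I r)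
    (hζ : ζ = (x : ℂ) • (1 : A) + (y : ℂ) • e₂ + (z : ℂ) • e₃)
    (ξ : Fin n → ℂ) (hξ : ∀ w, ξ w = (x : ℂ) + (y : ℂ) * a w + (z : ℂ) * b w)
    (T : Fin n → ℂ) (hT : ∀ s, T s = (y : ℂ) * a s + (z : ℂ) * b s)
    (t : ℂ) :
    algebraMap ℂ A t - ζ
      = ∑ r, (if r.val < m then t - ξ r else -T r) • I r := by
  have h1 : algebraMap ℂ A t = ∑ r, (if r.val < m then t else 0) • I r := by
    rw [Algebra.algebraMap_eq_smul_one, ← hone, Finset.smul_sum, Finset.sum_filter]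
    refine Finset.sum_congr rfl fun r _ => ?_
    split_ifs <;> simp
  have h2 : ζ = ∑ r, (if r.val < m then ξ r else T r) • I r := by
    rw [hζ, he₂, he₃, ← hone, Finset.smul_sum, Finset.smul_sum, Finset.smul_sum,
      Finset.sum_filter, ← Finset.sum_add_distrib, ← Finset.sum_add_distrib]
    refine Finset.sum_congr rfl fun r _ => ?_
    split_ifs with h
    · simp only [smul_smul, ← add_smul]
      rw [hξ]
    · simp only [zero_add, smul_smul, ← add_smul]
      rw [hT]
  rw [h1, h2, ← Finset.sum_sub_distrib]
  refine Finset.sum_congr rfl fun r _ => ?_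
  rw [← sub_smul]
  congr 1
  split_ifs <;> simp

/-- the explicit inverse of the resolvent element -/
lemma resolvent_mul_aux
    (hidem : ∀ r s : Fin n, r.val < m → s.val < m →
      I r * I s = if r = s then I r else 0)
    (hu : ∀ s : Fin n, m ≤ s.val → (u s).val < m)
    (hmul3 : ∀ s : Fin n, m ≤ s.val → ∀ r : Fin n, r.val < m →
      I r * I s = if r = u s then I s else 0)
    (hrad : ∀ s p : Fin n, m ≤ s.val → m ≤ p.val → I s * I p = 0)
    (hone : ∑ w ∈ Finset.univ.filter (fun w : Fin n => w.val < m), I w = 1)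
    (ξ T : Fin n → ℂ) (t : ℂ) (ht : ∀ r : Fin n, r.val < m → t - ξ r ≠ 0) :
    (∑ r, (if r.val < m then t - ξ r else -T r) • I r)
      * (∑ r, (if r.val < m then (t - ξ r)⁻¹
          else T r * ((t - ξ (u r)) ^ 2)⁻¹) • I r) = 1 := by
  rw [Finset.mul_sum]
  simp only [mul_smul_comm]
  rw [← Finset.sum_filter_add_sum_filter_not Finset.univ (fun r : Fin n => r.val < m)]
  have h1 : ∑ p ∈ Finset.univ.filter (fun r : Fin n => r.val < m),
        (if p.val < m then (t - ξ p)⁻¹ else T p * ((t - ξ (u p)) ^ 2)⁻¹) •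
          ((∑ r, (if r.val < m then t - ξ r else -T r) • I r) * I p)
      = 1 + ∑ p ∈ Finset.univ.filter (fun r : Fin n => r.val < m),
          ∑ r ∈ Finset.univ.filter (fun r : Fin n => m ≤ r.val ∧ u r = p),
            (-((t - ξ (u r))⁻¹ * T r)) • I r := by
    rw [← hone, ← Finset.sum_add_distrib]
    refine Finset.sum_congr rfl fun p hp => ?_
    have hpm : p.val < m := (Finset.mem_filter.mp hp).2
    rw [if_pos hpm, mulIP_aux I u hidem hmul3 _ p hpm, smul_add, smul_smul,
      if_pos hpm, inv_mul_cancel₀ (ht p hpm), one_smul]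
    congr 1
    rw [Finset.smul_sum]
    refine Finset.sum_congr rfl fun r hr => ?_
    obtain ⟨hrm, hur⟩ := (Finset.mem_filter.mp hr).2
    rw [if_neg (not_lt.mpr hrm), smul_smul, hur]
    congr 1
    ring
  have h2 : ∑ p ∈ Finset.univ.filter (fun r : Fin n => ¬ r.val < m),
        (if p.val < m then (t - ξ p)⁻¹ else T p * ((t - ξ (u p)) ^ 2)⁻¹) •
          ((∑ r, (if r.val < m then t - ξ r else -T r) • I r) * I p)
      = ∑ p ∈ Finset.univ.filter (fun r : Fin n => ¬ r.val < m),
          ((t - ξ (u p))⁻¹ * T p) • I p := by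
    refine Finset.sum_congr rfl fun p hp => ?_
    have hpm : ¬ p.val < m := (Finset.mem_filter.mp hp).2
    have hpm' : m ≤ p.val := le_of_not_gt hpm
    rw [if_neg hpm, mulIQ_aux I u hu hmul3 hrad _ p hpm',
      if_pos (hu p hpm'), smul_smul]
    congr 1
    have h0 : t - ξ (u p) ≠ 0 := ht (u p) (hu p hpm')
    field_simp
  rw [h1, h2]
  have h3 : ∑ p ∈ Finset.univ.filter (fun r : Fin n => r.val < m),
        ∑ r ∈ Finset.univ.filter (fun r : Fin n => m ≤ r.val ∧ u r = p),
          (-((t - ξ (u r))⁻¹ * T r)) • I r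
      = ∑ r ∈ Finset.univ.filter (fun r : Fin n => ¬ r.val < m),
          (-((t - ξ (u r))⁻¹ * T r)) • I r := by
    rw [← Finset.sum_fiberwise_of_maps_to
      (g := u) (t := Finset.univ.filter (fun r : Fin n => r.val < m))
      (fun r hr => Finset.mem_filter.mpr
        ⟨Finset.mem_univ _, hu r (le_of_not_gt (Finset.mem_filter.mp hr).2)⟩)]
    refine Finset.sum_congr rfl fun p _ => ?_
    apply Finset.sum_congr _ (fun _ _ => rfl)
    rw [Finset.filter_filter]
    apply Finset.filter_congr
    intro r _
    simp [not_lt]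
  rw [h3]
  simp only [neg_smul, Finset.sum_neg_distrib]
  abel
end Aux2

lemma circleIntegral_add_aux {E : Type*} [NormedAddCommGroup E] [NormedSpace ℂ E]
    {f g : ℂ → E} {c : ℂ} {R : ℝ} (hf : CircleIntegrable f c R)
    (hg : CircleIntegrable g c R) :
    (∮ z in C(c, R), (f z + g z)) = (∮ z in C(c, R), f z) + ∮ z in C(c, R), g z := by
  simp only [circleIntegral, smul_add, intervalIntegral.integral_add hf.out hg.out]

/-- Cauchy-type integral of the resolvent in `A_n^m` with trivial radical
multiplication: for a closed curve (here a circle `|z − c| = R`) surrounding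
`ξ_u` and no other `ξ_q`, and `F` holomorphic in a neighborhood of the curve
and its interior,
`(2πi)⁻¹ I_u ∮ F(t)(t e₁ − ζ)⁻¹ dt = F(ξ_u) I_u + Σ_{s : u_s = u} T_s F'(ξ_u) I_s`. -/
theorem cauchy_integral_resolvent (n m : ℕ) (hm : m ≤ n) (A : Type*)
    [NormedCommRing A] [NormedAlgebra ℂ A] [CompleteSpace A]
    (I : Module.Basis (Fin n) ℂ A)
    (hidem : ∀ r s : Fin n, r.val < m → s.val < m →
      I r * I s = if r = s then I r else 0)
    (u : Fin n → Fin n)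
    (hu : ∀ s : Fin n, m ≤ s.val → (u s).val < m)
    (hmul3 : ∀ s : Fin n, m ≤ s.val → ∀ r : Fin n, r.val < m →
      I r * I s = if r = u s then I s else 0)
    (hrad : ∀ s p : Fin n, m ≤ s.val → m ≤ p.val → I s * I p = 0)
    (hone : ∑ w ∈ Finset.univ.filter (fun w : Fin n => w.val < m), I w = 1)
    (a b : Fin n → ℂ) (x y z : ℝ) (e₂ e₃ ζ : A)
    (he₂ : e₂ = ∑ r, a r • I r) (he₃ : e₃ = ∑ r, b r • I r)
    (hζ : ζ = (x : ℂ) • (1 : A) + (y : ℂ) • e₂ + (z : ℂ) • e₃)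
    (ξ : Fin n → ℂ) (hξ : ∀ w, ξ w = (x : ℂ) + (y : ℂ) * a w + (z : ℂ) * b w)
    (T : Fin n → ℂ) (hT : ∀ s, T s = (y : ℂ) * a s + (z : ℂ) * b s)
    (w : Fin n) (hw : w.val < m)
    -- the circle `Γ` with centre `c` and radius `R` surrounds `ξ_w` and no other `ξ_q`
    (c : ℂ) (R : ℝ) (hR : 0 < R) (hin : ξ w ∈ ball c R)
    (hout : ∀ q : Fin n, q.val < m → q ≠ w → ξ q ∉ closedBall c R)
    -- `F` is holomorphic in a neighbourhood of the curve and its interior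
    (U : Set ℂ) (hU : IsOpen U) (hUc : closedBall c R ⊆ U)
    (F : ℂ → ℂ) (hF : DifferentiableOn ℂ F U) :
    (2 * Real.pi * Complex.I)⁻¹ •
        (I w * ∮ t in C(c, R), F t • Ring.inverse (algebraMap ℂ A t - ζ))
      = F (ξ w) • I w
        + ∑ s ∈ Finset.univ.filter (fun s : Fin n => m ≤ s.val ∧ u s = w),
            (T s * deriv F (ξ w)) • I s := by
  -- notation
  set N : A := ∑ s ∈ Finset.univ.filter (fun s : Fin n => m ≤ s.val ∧ u s = w),
      T s • I s with hN
  -- every `ξ r`, `r < m`, is avoided by the circle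
  have hsph : ∀ t ∈ sphere c R, ∀ r : Fin n, r.val < m → t - ξ r ≠ 0 := by
    intro t ht r hr
    rw [sub_ne_zero]
    by_cases hrw : r = w
    · subst hrw
      exact fun h => (mem_ball.mp hin).ne' (by rw [← h, ← mem_sphere.mp ht])
    · exact fun h => hout r hr hrw (h ▸ closedBall_subset_closedBall le_rfl
        (sphere_subset_closedBall ht))
  -- the inverse of the resolvent on the circle
  have hRinv : ∀ t ∈ sphere c R, Ring.inverse (algebraMap ℂ A t - ζ)
      = ∑ r, (if r.val < m then (t - ξ r)⁻¹
          else T r * ((t - ξ (u r)) ^ 2)⁻¹) • I r := by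
    intro t ht
    have hMG : (algebraMap ℂ A t - ζ)
        * (∑ r, (if r.val < m then (t - ξ r)⁻¹
            else T r * ((t - ξ (u r)) ^ 2)⁻¹) • I r) = 1 := by
      rw [resolvent_decomp_aux I hone a b x y z e₂ e₃ ζ he₂ he₃ hζ ξ hξ T hT t]
      exact resolvent_mul_aux I u hidem hu hmul3 hrad hone ξ T t (hsph t ht)
    have hunit : IsUnit (algebraMap ℂ A t - ζ) := IsUnit.of_mul_eq_one _ hMG
    calc Ring.inverse (algebraMap ℂ A t - ζ)
        = Ring.inverse (algebraMap ℂ A t - ζ) * ((algebraMap ℂ A t - ζ)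
            * (∑ r, (if r.val < m then (t - ξ r)⁻¹
                else T r * ((t - ξ (u r)) ^ 2)⁻¹) • I r)) := by rw [hMG, mul_one]
      _ = (Ring.inverse (algebraMap ℂ A t - ζ) * (algebraMap ℂ A t - ζ))
            * (∑ r, (if r.val < m then (t - ξ r)⁻¹
                else T r * ((t - ξ (u r)) ^ 2)⁻¹) • I r) := (mul_assoc _ _ _).symm
      _ = _ := by rw [Ring.inverse_mul_cancel _ hunit, one_mul]
  -- replace the integrand by the explicit resolvent
  have hstep1 : (∮ t in C(c, R), F t • Ring.inverse (algebraMap ℂ A t - ζ))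
      = ∮ t in C(c, R), F t • ∑ r, (if r.val < m then (t - ξ r)⁻¹
          else T r * ((t - ξ (u r)) ^ 2)⁻¹) • I r :=
    circleIntegral.integral_congr hR.le fun t ht => by rw [hRinv t ht]
  -- continuity of the explicit resolvent integrand on the circle
  have hFc : ContinuousOn F (closedBall c R) := hF.continuousOn.mono hUc
  have hGcont : ContinuousOn (fun t => F t • ∑ r, (if r.val < m then (t - ξ r)⁻¹
      else T r * ((t - ξ (u r)) ^ 2)⁻¹) • I r) (sphere c R) := by
    refine ContinuousOn.smul (hFc.mono sphere_subset_closedBall) ?_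
    refine continuousOn_finset_sum _ fun r _ => ?_
    by_cases h : r.val < m
    · simp only [if_pos h]
      exact (((continuous_id.sub continuous_const).continuousOn.inv₀
        fun t ht => hsph t ht r h).smul continuousOn_const)
    · simp only [if_neg h]
      refine (continuousOn_const.mul ?_).smul continuousOn_const
      exact (((continuous_id.sub continuous_const).pow 2).continuousOn.inv₀
        fun t ht => pow_ne_zero 2 (hsph t ht (u r) (hu r (le_of_not_gt h))))
  have hint : CircleIntegrable (fun t => F t • ∑ r, (if r.val < m then (t - ξ r)⁻¹
      else T r * ((t - ξ (u r)) ^ 2)⁻¹) • I r) c R := hGcont.circleIntegrable hR.le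
  -- move `I w` inside the integral
  have hswap : I w * (∮ t in C(c, R), F t • ∑ r, (if r.val < m then (t - ξ r)⁻¹
      else T r * ((t - ξ (u r)) ^ 2)⁻¹) • I r)
      = ∮ t in C(c, R), I w * (F t • ∑ r, (if r.val < m then (t - ξ r)⁻¹
          else T r * ((t - ξ (u r)) ^ 2)⁻¹) • I r) := by
    have h := (ContinuousLinearMap.mul ℂ A (I w)).intervalIntegral_comp_comm hint.out
    simp only [ContinuousLinearMap.map_smul, ContinuousLinearMap.mul_apply'] at h
    simp only [circleIntegral, mul_smul_comm]
    exact h.symm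
  -- pointwise identity after multiplying by `I w`
  have hpt : ∀ t : ℂ, I w * (F t • ∑ r, (if r.val < m then (t - ξ r)⁻¹
      else T r * ((t - ξ (u r)) ^ 2)⁻¹) • I r)
      = ((t - ξ w)⁻¹ • F t) • I w + (((t - ξ w) ^ 2)⁻¹ • F t) • N := by
    intro t
    rw [mul_smul_comm, mul_comm (I w), mulIP_aux I u hidem hmul3 _ w hw,
      if_pos hw, smul_add]
    congr 1
    · simp only [smul_eq_mul, smul_smul]
      congr 1
      ring
    · rw [hN, Finset.smul_sum, Finset.smul_sum]
      refine Finset.sum_congr rfl fun r hr => ?_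
      obtain ⟨hrm, hur⟩ := (Finset.mem_filter.mp hr).2
      rw [if_neg (not_lt.mpr hrm), hur]
      simp only [smul_eq_mul, smul_smul]
      congr 1
      ring
  -- split the integral into the two Cauchy integrals
  have h₁ : CircleIntegrable (fun t => ((t - ξ w)⁻¹ • F t) • I w) c R := by
    refine (ContinuousOn.smul ?_ continuousOn_const).circleIntegrable hR.le
    exact ((continuous_id.sub continuous_const).continuousOn.inv₀
      fun t ht => hsph t ht w hw).smul (hFc.mono sphere_subset_closedBall)
  have h₂ : CircleIntegrable (fun t => (((t - ξ w) ^ 2)⁻¹ • F t) • N) c R := by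
    refine (ContinuousOn.smul ?_ continuousOn_const).circleIntegrable hR.le
    exact (((continuous_id.sub continuous_const).pow 2).continuousOn.inv₀
      fun t ht => pow_ne_zero 2 (hsph t ht w hw)).smul
      (hFc.mono sphere_subset_closedBall)
  -- the two Cauchy formulas
  have hC1 : (2 * Real.pi * Complex.I)⁻¹ •
      (∮ t in C(c, R), (t - ξ w)⁻¹ • F t) = F (ξ w) :=
    Complex.two_pi_I_inv_smul_circleIntegral_sub_inv_smul_of_differentiable_on_off_countable
      Set.countable_empty hin hFc
      (fun x hx => hF.differentiableAt (hU.mem_nhds (hUc (ball_subset_closedBall hx.1))))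
  have hC2 : (2 * Real.pi * Complex.I)⁻¹ •
      (∮ t in C(c, R), ((t - ξ w) ^ 2)⁻¹ • F t) = deriv F (ξ w) :=
    Complex.two_pi_I_inv_smul_circleIntegral_sub_sq_inv_smul_of_differentiable
      hU hUc hF hin
  -- put everything together
  rw [hstep1, hswap]
  simp only [hpt]
  rw [circleIntegral_add_aux h₁ h₂, circleIntegral.integral_smul_const,
    circleIntegral.integral_smul_const, smul_add, ← smul_assoc, ← smul_assoc,
    hC1, hC2]
  congr 1
  rw [hN, Finset.smul_sum]
  refine Finset.sum_congr rfl fun s hs => ?_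
  rw [smul_smul]
  congr 1
  ring
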